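/- arXiv:2003.09897 — 4 statements merged into one kernel-verified Lean document; each statement's English description precedes it below -/
import Mathlib

section
/- There exists r₀ > 0 such that for every real r with 0 < r < r₀, the contour integral (1/(2πi)) ∮_{|z|=r} tan(2z)/(tan z)^6 dz over the counterclockwise circle of radius r centered at 0 equals 2; equivalently, the residue at z = 0 of the meromorphic function z ↦ tan(2z)/(tan z)^6 equals 2. -/
open Complex

lemma aux_cos_bound {w : ℂ} (hw : ‖w‖ ≤ 1) :
    ‖Complex.cos w - 1‖ ≤ 2 * ‖w‖ := by
  have h1 : ‖Complex.exp (w*I) - 1‖ ≤ 2 * ‖w‖ := by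
    simpa using Complex.norm_exp_sub_one_le (x := w * I) (by simpa using hw)
  have h2 : ‖Complex.exp (-(w*I)) - 1‖ ≤ 2 * ‖w‖ := by
    simpa using Complex.norm_exp_sub_one_le (x := -(w * I)) (by simpa using hw)
  have h : Complex.cos w - 1 = ((Complex.exp (w*I) - 1) + (Complex.exp (-(w*I)) - 1))/2 := by
    rw [Complex.cos]; ring_nf
  rw [h]
  calc ‖_‖
      ≤ (‖Complex.exp (w*I) - 1‖ + ‖Complex.exp (-(w*I)) - 1‖)/2 := by
        rw [norm_div]; simp only [Complex.norm_two]; gcongr; exact norm_add_le _ _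
    _ ≤ (2 * ‖w‖ + 2 * ‖w‖)/2 := by gcongr
    _ = 2 * ‖w‖ := by ring

lemma aux_sin_bound {w : ℂ} (hw : ‖w‖ ≤ 1) :
    ‖Complex.sin w - w‖ ≤ ‖w‖ ^ 2 := by
  have h1 : ‖Complex.exp (w*I) - 1 - w*I‖ ≤ ‖w‖ ^ 2 := by
    simpa using Complex.norm_exp_sub_one_sub_id_le (x := w * I) (by simpa using hw)
  have h2 : ‖Complex.exp (-(w*I)) - 1 - (-(w*I))‖ ≤ ‖w‖ ^ 2 := by
    simpa using Complex.norm_exp_sub_one_sub_id_le (x := -(w * I)) (by simpa using hw)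
  have h : Complex.sin w - w
      = ((Complex.exp (-(w*I)) - 1 - (-(w*I))) - (Complex.exp (w*I) - 1 - w*I)) * I / 2 := by
    rw [Complex.sin]; ring_nf; rw [Complex.I_sq]; ring
  rw [h]
  calc ‖_‖
      ≤ (‖Complex.exp (-(w*I)) - 1 - (-(w*I))‖
          + ‖Complex.exp (w*I) - 1 - w*I‖)/2 := by
        rw [norm_div, norm_mul, Complex.norm_I, mul_one]
        simp only [Complex.norm_two]; gcongr
        exact norm_sub_le _ _
    _ ≤ (‖w‖ ^2 + ‖w‖^2)/2 := by gcongr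
    _ = ‖w‖ ^ 2 := by ring

lemma aux_slit_of_abs_lt {w : ℂ} (h : ‖w - 1‖ < 1) : w ∈ Complex.slitPlane := by
  rw [Complex.mem_slitPlane_iff]
  left
  have h1 : |(w - 1).re| ≤ ‖w - 1‖ := Complex.abs_re_le_norm _
  have h2 : (w - 1).re = w.re - 1 := by simp
  rw [h2] at h1
  have := abs_le.1 h1
  linarith [this.1]

lemma hasDerivAt_F {z : ℂ} (hz0 : z ≠ 0) (hs : Complex.sin z ≠ 0) (hc : Complex.cos z ≠ 0)
    (hsl1 : Complex.sin z / z ∈ Complex.slitPlane)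
    (hsl2 : Complex.cos (2*z) ∈ Complex.slitPlane) :
    HasDerivAt (fun w => -(Complex.cos w / Complex.sin w)^4/2
        + 2 * Complex.log (Complex.sin w / w) - Complex.log (Complex.cos (2*w)) / 2)
      (Complex.tan (2*z) / Complex.tan z ^ 6 - 2 * z⁻¹) z := by
  have hc2 : Complex.cos (2*z) ≠ 0 := Complex.slitPlane_ne_zero hsl2
  have hcot : HasDerivAt (fun w => Complex.cos w / Complex.sin w)
      ((-Complex.sin z * Complex.sin z - Complex.cos z * Complex.cos z) / Complex.sin z ^ 2) z :=
    (Complex.hasDerivAt_cos z).div (Complex.hasDerivAt_sin z) hs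
  have part1 := ((hcot.pow 4).neg).div_const 2
  have hq : HasDerivAt (fun w => Complex.sin w / w)
      ((Complex.cos z * z - Complex.sin z * 1) / z ^ 2) z :=
    (Complex.hasDerivAt_sin z).div (hasDerivAt_id z) hz0
  have part2 := (hq.clog hsl1).const_mul (2:ℂ)
  have e : (Complex.cos z * z - Complex.sin z * 1) / z ^ 2 / (Complex.sin z / z)
      = (Complex.cos z * z - Complex.sin z) / (z * Complex.sin z) := by
    field_simp
  rw [e] at part2
  have hin : HasDerivAt (fun w => Complex.cos (2*w)) (-Complex.sin (2*z) * 2) z := by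
    have := (Complex.hasDerivAt_cos (2*z)).comp z ((hasDerivAt_id z).const_mul (2:ℂ))
    simp only [mul_one] at this; exact this
  have part3 := (hin.clog hsl2).div_const 2
  have total := (part1.add part2).sub part3
  refine total.congr_deriv ?_
  have hden : Complex.sin z ^ 3 * Complex.sin z ^ 2 * 2 * (z * Complex.sin z) ≠ 0 := by
    simp [hs, hz0]
  have hw : Complex.cos z ^ 2 - Complex.sin z ^ 2 ≠ 0 := by
    rw [← Complex.cos_two_mul']; exact hc2
  rw [Complex.tan_eq_sin_div_cos, Complex.tan_eq_sin_div_cos, Complex.sin_two_mul,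
    Complex.cos_two_mul']
  simp only [Nat.reduceSub]
  field_simp
  ring

/-- There exists `r₀ > 0` such that for every `0 < r < r₀`, the contour integral
`(1/(2πi)) ∮_{|z|=r} tan(2z)/(tan z)^6 dz` over the counterclockwise circle of radius `r`
centered at `0` equals `2`; i.e. the residue at `z = 0` of `z ↦ tan(2z)/(tan z)^6` is `2`. -/
theorem residue_tan_two_div_tan_pow_six_eq_two :
    ∃ r₀ : ℝ, 0 < r₀ ∧ ∀ r : ℝ, 0 < r → r < r₀ →
      (2 * Real.pi * Complex.I)⁻¹ *
        (∮ z in C(0, r), Complex.tan (2 * z) / Complex.tan z ^ 6) = 2 := by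
  refine ⟨1/4, by norm_num, fun r hr hr' => ?_⟩
  -- basic facts about points on the sphere
  have hsph : ∀ z ∈ Metric.sphere (0:ℂ) r, ‖z‖ = r := by
    intro z hz
    simpa [Complex.dist_eq] using hz
  have key : ∀ z ∈ Metric.sphere (0:ℂ) r, z ≠ 0 ∧ Complex.sin z ≠ 0 ∧ Complex.cos z ≠ 0 ∧
      Complex.cos (2*z) ≠ 0 ∧ Complex.sin z / z ∈ Complex.slitPlane ∧
      Complex.cos (2*z) ∈ Complex.slitPlane := by
    intro z hz
    have habs : ‖z‖ = r := hsph z hz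
    have h14 : ‖z‖ < 1/4 := by rw [habs]; linarith
    have hz0 : z ≠ 0 := by
      intro h; rw [h] at habs; simp at habs; exact absurd habs.symm (ne_of_gt hr)
    have habs0 : 0 < ‖z‖ := by rw [habs]; exact hr
    -- sin z / z ∈ slitPlane
    have hsl1 : Complex.sin z / z ∈ Complex.slitPlane := by
      apply aux_slit_of_abs_lt
      have h1 : Complex.sin z / z - 1 = (Complex.sin z - z) / z := by
        field_simp
      rw [h1, norm_div]
      have h2 := aux_sin_bound (w := z) (by linarith)
      calc ‖Complex.sin z - z‖ / ‖z‖
          ≤ ‖z‖ ^ 2 / ‖z‖ := by gcongr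
        _ = ‖z‖ := by field_simp [ne_of_gt habs0]
        _ < 1 := by linarith
    have hs : Complex.sin z ≠ 0 := by
      intro h
      rw [h, zero_div] at hsl1
      exact Complex.zero_notMem_slitPlane hsl1
    -- cos z ≠ 0
    have hc : Complex.cos z ≠ 0 := by
      intro h
      have h2 := aux_cos_bound (w := z) (by linarith)
      rw [h] at h2
      simp at h2
      linarith
    -- cos 2z ∈ slitPlane
    have hsl2 : Complex.cos (2*z) ∈ Complex.slitPlane := by
      apply aux_slit_of_abs_lt
      have h2 := aux_cos_bound (w := 2*z) (by rw [norm_mul]; simp; linarith)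
      calc ‖Complex.cos (2*z) - 1‖ ≤ 2 * ‖2*z‖ := h2
        _ = 4 * ‖z‖ := by rw [norm_mul]; simp; ring
        _ < 1 := by linarith
    exact ⟨hz0, hs, hc, Complex.slitPlane_ne_zero hsl2, hsl1, hsl2⟩
  -- integrability
  have hcont : ContinuousOn (fun z => Complex.tan (2*z) / Complex.tan z ^ 6)
      (Metric.sphere (0:ℂ) r) := by
    intro z hz
    obtain ⟨hz0, hs, hc, hc2, -, -⟩ := key z hz
    apply ContinuousAt.continuousWithinAt
    have h1 : ContinuousAt (fun w => Complex.tan (2*w)) z := by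
      simp only [Complex.tan_eq_sin_div_cos]
      exact ((Complex.continuous_sin.comp (continuous_const.mul continuous_id)).continuousAt).div
        ((Complex.continuous_cos.comp (continuous_const.mul continuous_id)).continuousAt) hc2
    have h2 : ContinuousAt (fun w => Complex.tan w ^ 6) z := by
      simp only [Complex.tan_eq_sin_div_cos]
      exact (Complex.continuous_sin.continuousAt.div Complex.continuous_cos.continuousAt hc).pow 6
    apply h1.div h2
    simp only [Complex.tan_eq_sin_div_cos]
    exact pow_ne_zero _ (div_ne_zero hs hc)
  have hcont2 : ContinuousOn (fun z : ℂ => 2 * z⁻¹) (Metric.sphere (0:ℂ) r) := by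
    intro z hz
    obtain ⟨hz0, -⟩ := key z hz
    exact (ContinuousAt.continuousWithinAt (by exact (continuousAt_inv₀ hz0).const_smul (2:ℂ)))
  have hi1 : CircleIntegrable (fun z => Complex.tan (2*z) / Complex.tan z ^ 6) 0 r :=
    hcont.circleIntegrable (le_of_lt hr)
  have hi2 : CircleIntegrable (fun z : ℂ => 2 * z⁻¹) 0 r :=
    hcont2.circleIntegrable (le_of_lt hr)
  -- the integral of the difference vanishes
  have hzero : (∮ z in C(0, r), (Complex.tan (2*z) / Complex.tan z ^ 6 - 2 * z⁻¹)) = 0 := by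
    apply circleIntegral.integral_eq_zero_of_hasDerivWithinAt (le_of_lt hr)
    intro z hz
    obtain ⟨hz0, hs, hc, hc2, hsl1, hsl2⟩ := key z hz
    exact (hasDerivAt_F hz0 hs hc hsl1 hsl2).hasDerivWithinAt
  have hsub := circleIntegral.integral_sub hi1 hi2
  rw [hzero] at hsub
  have hmain : (∮ z in C(0, r), Complex.tan (2*z) / Complex.tan z ^ 6)
      = ∮ z in C(0, r), 2 * z⁻¹ := by
    have := sub_eq_zero.mp hsub.symm
    exact this
  have hinv : (∮ z in C(0, r), (2:ℂ) * z⁻¹) = 2 * (2 * Real.pi * I) := by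
    rw [circleIntegral.integral_const_mul]
    have h0 : (∮ z in C(0, r), z⁻¹) = 2 * Real.pi * I := by
      have := circleIntegral.integral_sub_center_inv (0:ℂ) (R := r) (ne_of_gt hr)
      simpa using this
    rw [h0]
  rw [hmain, hinv]
  have hpi : (Real.pi : ℂ) ≠ 0 := by
    simp [Real.pi_ne_zero]
  field_simp
end

section
/- For every real x ≥ 0, every real ε with 0 < ε < 1, and every real δ > 0, one has x^ε ≤ δ^{(ε−1)/ε} · x + δ · ε^{1/(1−ε)} · (1/ε − 1). -/
/-- For every real `x ≥ 0`, every real `ε` with `0 < ε < 1`, and every real `δ > 0`,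
one has `x^ε ≤ δ^((ε−1)/ε) · x + δ · ε^(1/(1−ε)) · (1/ε − 1)`. -/
theorem young_type_inequality (x ε δ : ℝ) (hx : 0 ≤ x) (hε₀ : 0 < ε) (hε₁ : ε < 1)
    (hδ : 0 < δ) :
    x ^ ε ≤ δ ^ ((ε - 1) / ε) * x + δ * ε ^ (1 / (1 - ε)) * (1 / ε - 1) := by
  have h1ε : 0 < 1 - ε := by linarith
  set t : ℝ := δ ^ (ε - 1) * ε ^ (-ε) with ht
  have htpos : 0 < t := mul_pos (Real.rpow_pos_of_pos hδ _) (Real.rpow_pos_of_pos hε₀ _)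
  have hpq : (1 / ε).HolderConjugate (1 / (1 - ε)) := by
    exact Real.holderConjugate_one_div hε₀ h1ε (by ring)
  have key := Real.young_inequality_of_nonneg
    (mul_nonneg (Real.rpow_nonneg hx ε) htpos.le) (inv_nonneg.2 htpos.le) hpq
  rw [mul_inv_cancel_right₀ htpos.ne'] at key
  refine key.trans (le_of_eq ?_)
  have hA : (x ^ ε * t) ^ (1 / ε) = x * (δ ^ ((ε - 1) / ε) * ε⁻¹) := by
    rw [Real.mul_rpow (Real.rpow_nonneg hx ε) htpos.le, ← Real.rpow_mul hx,
      mul_one_div, div_self hε₀.ne', Real.rpow_one, ht,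
      Real.mul_rpow (Real.rpow_pos_of_pos hδ _).le (Real.rpow_pos_of_pos hε₀ _).le,
      ← Real.rpow_mul hδ.le, ← Real.rpow_mul hε₀.le, mul_one_div (ε - 1) ε]
    have h2 : (-ε) * (1 / ε) = -1 := by field_simp
    rw [h2, Real.rpow_neg_one]
  have hB : t⁻¹ ^ (1 / (1 - ε)) = δ * ε ^ (ε / (1 - ε)) := by
    have h3 : t⁻¹ = δ ^ (1 - ε) * ε ^ ε := by
      rw [ht, mul_inv, ← Real.rpow_neg hδ.le, ← Real.rpow_neg hε₀.le, neg_neg, neg_sub]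
    rw [h3, Real.mul_rpow (Real.rpow_pos_of_pos hδ _).le (Real.rpow_pos_of_pos hε₀ _).le,
      ← Real.rpow_mul hδ.le, ← Real.rpow_mul hε₀.le, mul_one_div ε (1 - ε),
      mul_one_div (1 - ε) (1 - ε), div_self h1ε.ne', Real.rpow_one]
  rw [hA, hB]
  have h4 : ε ^ (1 / (1 - ε)) = ε ^ (ε / (1 - ε)) * ε := by
    rw [← Real.rpow_add_one hε₀.ne']
    congr 1
    field_simp
    ring
  rw [h4]
  field_simp
end

section
/- In SL(2,ℤ), the subgroup Γ₀(2) is generated by the two matrices T = [[1,1],[0,1]] and S T² S T = [[−1,−1],[2,1]], where S = [[0,−1],[1,0]]. -/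
open Matrix

/-- `T = [[1,1],[0,1]]` in `SL(2,ℤ)`. -/
def Tmat : Matrix.SpecialLinearGroup (Fin 2) ℤ :=
  ⟨!![1, 1; 0, 1], by simp [Matrix.det_fin_two_of]⟩

/-- `S T² S T = [[−1,−1],[2,1]]` in `SL(2,ℤ)`, where `S = [[0,−1],[1,0]]`. -/
def ST2STmat : Matrix.SpecialLinearGroup (Fin 2) ℤ :=
  ⟨!![-1, -1; 2, 1], by norm_num [Matrix.det_fin_two_of]⟩

namespace Gamma0TwoAux

abbrev SL2 := Matrix.SpecialLinearGroup (Fin 2) ℤ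

/-- `L = [[1,0],[2,1]]`. -/
def Lmat : SL2 := ⟨!![1, 0; 2, 1], by norm_num [Matrix.det_fin_two_of]⟩

lemma Tmat_eq : Tmat = ModularGroup.T := rfl

lemma coe_Tmat_zpow (n : ℤ) : ((Tmat ^ n : SL2) : Matrix (Fin 2) (Fin 2) ℤ) = !![1, n; 0, 1] := by
  rw [Tmat_eq]; exact ModularGroup.coe_T_zpow n

lemma coe_Lmat_inv : ((Lmat⁻¹ : SL2) : Matrix (Fin 2) (Fin 2) ℤ) = !![1, 0; -2, 1] := by
  rw [Matrix.SpecialLinearGroup.SL2_inv_expl]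
  ext i j
  fin_cases i <;> fin_cases j <;> rfl

lemma coe_Lmat_zpow (n : ℤ) :
    ((Lmat ^ n : SL2) : Matrix (Fin 2) (Fin 2) ℤ) = !![1, 0; 2 * n, 1] := by
  induction n using Int.induction_on with
  | zero => simp [Matrix.SpecialLinearGroup.coe_one, Matrix.one_fin_two]
  | succ n ih =>
      rw [_root_.zpow_add, zpow_one, Matrix.SpecialLinearGroup.coe_mul, ih,
        show ((Lmat : SL2) : Matrix (Fin 2) (Fin 2) ℤ) = !![1, 0; 2, 1] from rfl,
        Matrix.mul_fin_two]
      congrm !![?_, ?_; ?_, ?_] <;> ring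
  | pred n ih =>
      rw [_root_.zpow_sub, zpow_one, Matrix.SpecialLinearGroup.coe_mul, ih, coe_Lmat_inv,
        Matrix.mul_fin_two]
      congrm !![?_, ?_; ?_, ?_] <;> push_cast <;> ring

lemma Lmat_eq : Lmat = ST2STmat ^ 2 * Tmat * ST2STmat⁻¹ := by
  have hinv : ((ST2STmat⁻¹ : SL2) : Matrix (Fin 2) (Fin 2) ℤ) = !![1, 1; -2, -1] := by
    rw [Matrix.SpecialLinearGroup.SL2_inv_expl]
    ext i j
    fin_cases i <;> fin_cases j <;> rfl
  apply Subtype.ext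
  show (Lmat : Matrix (Fin 2) (Fin 2) ℤ) = _
  rw [Matrix.SpecialLinearGroup.coe_mul, Matrix.SpecialLinearGroup.coe_mul, sq,
    Matrix.SpecialLinearGroup.coe_mul, hinv]
  show (!![1,0;2,1] : Matrix (Fin 2) (Fin 2) ℤ)
      = !![-1,-1;2,1] * !![-1,-1;2,1] * !![1,1;0,1] * !![1,1;-2,-1]
  norm_num [Matrix.mul_fin_two]

lemma mem_closure_of_dvd (n : ℕ) :
    ∀ γ : SL2, ((γ : Matrix (Fin 2) (Fin 2) ℤ) 1 0).natAbs = n →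
    (2 : ℤ) ∣ (γ : Matrix (Fin 2) (Fin 2) ℤ) 1 0 →
    γ ∈ Subgroup.closure {Tmat, ST2STmat} := by
  induction n using Nat.strong_induction_on with
  | _ n ih =>
  intro γ hn hdvd
  set G := Subgroup.closure ({Tmat, ST2STmat} : Set SL2) with hGdef
  have hTG : Tmat ∈ G := Subgroup.subset_closure (by simp)
  have hUG : ST2STmat ∈ G := Subgroup.subset_closure (by simp)
  have hLG : Lmat ∈ G := by
    rw [Lmat_eq]
    exact G.mul_mem (G.mul_mem (G.pow_mem hUG 2) hTG) (G.inv_mem hUG)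
  set a := (γ : Matrix (Fin 2) (Fin 2) ℤ) 0 0 with ha
  set b := (γ : Matrix (Fin 2) (Fin 2) ℤ) 0 1 with hb
  set c := (γ : Matrix (Fin 2) (Fin 2) ℤ) 1 0 with hc
  set d := (γ : Matrix (Fin 2) (Fin 2) ℤ) 1 1 with hd
  have hγeta : (γ : Matrix (Fin 2) (Fin 2) ℤ) = !![a, b; c, d] := Matrix.eta_fin_two _
  have hdet : a * d - b * c = 1 := by
    have h2 := γ.2
    rw [Matrix.det_fin_two] at h2
    exact h2
  by_cases hc0 : c = 0
  · -- c = 0 : γ = ± T ^ (±b)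
    have had : a * d = 1 := by rw [hc0] at hdet; linarith
    rcases Int.eq_one_or_neg_one_of_mul_eq_one' had with ⟨ha1, hd1⟩ | ha1
    · have : γ = Tmat ^ b := by
        apply Subtype.ext
        show (γ : Matrix (Fin 2) (Fin 2) ℤ) = _
        rw [coe_Tmat_zpow, hγeta, ha1, hd1, hc0]
      rw [this]; exact G.zpow_mem hTG b
    · have : γ = ST2STmat ^ 2 * Tmat ^ (-b) := by
        apply Subtype.ext
        show (γ : Matrix (Fin 2) (Fin 2) ℤ) = _
        rw [Matrix.SpecialLinearGroup.coe_mul, coe_Tmat_zpow,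
          show ((ST2STmat ^ 2 : SL2) : Matrix (Fin 2) (Fin 2) ℤ) = !![-1,0;0,-1] by
            rw [sq, Matrix.SpecialLinearGroup.coe_mul]
            norm_num [show ((ST2STmat : SL2) : Matrix (Fin 2) (Fin 2) ℤ) = !![-1,-1;2,1] from rfl,
              Matrix.mul_fin_two],
          hγeta, ha1.1, ha1.2, hc0, Matrix.mul_fin_two]
        norm_num
      rw [this]
      exact G.mul_mem (G.pow_mem hUG 2) (G.zpow_mem hTG (-b))
  · -- c ≠ 0
    have haodd : ¬ (2 : ℤ) ∣ a := by
      intro h2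
      have : (2 : ℤ) ∣ a * d - b * c := dvd_sub (h2.mul_right d) (hdvd.mul_left b)
      rw [hdet] at this
      omega
    set q := a / c with hq
    set a' := a % c with ha'
    have ha'def : a' = a - c * q := by rw [ha', hq, Int.emod_def]
    have ha'0 : 0 ≤ a' := Int.emod_nonneg a hc0
    have ha'lt : a' < |c| := Int.emod_lt_abs a hc0
    have ha'odd : ¬ (2 : ℤ) ∣ a' := by
      intro h2
      exact haodd (by rw [show a = a' + c * q by omega]; exact dvd_add h2 (hdvd.mul_right q))
    have ha'pos : 0 < a' := lt_of_le_of_ne ha'0 (by intro h; exact ha'odd (by omega))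
    -- first reduction: γ₁ = T^(-q) * γ
    set γ₁ : SL2 := Tmat ^ (-q) * γ with hγ₁
    have hcoe1 : (γ₁ : Matrix (Fin 2) (Fin 2) ℤ) = !![1, -q; 0, 1] * !![a, b; c, d] := by
      rw [hγ₁, Matrix.SpecialLinearGroup.coe_mul, coe_Tmat_zpow, hγeta]
    have h100 : (γ₁ : Matrix (Fin 2) (Fin 2) ℤ) 0 0 = a' := by
      rw [hcoe1, Matrix.mul_fin_two]
      simp only [Matrix.of_apply, Matrix.cons_val_zero]
      rw [ha'def]; ring
    have h110 : (γ₁ : Matrix (Fin 2) (Fin 2) ℤ) 1 0 = c := by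
      rw [hcoe1, Matrix.mul_fin_two]
      simp
    -- second reduction: γ₂ = L^m * γ₁
    set q2 := c / (2 * a') with hq2
    set r := c % (2 * a') with hr
    have hrdef : r = c - 2 * a' * q2 := by rw [hr, hq2, Int.emod_def]
    have hr0 : 0 ≤ r := Int.emod_nonneg c (by positivity)
    have hrlt : r < 2 * a' := Int.emod_lt_of_pos c (by positivity)
    have hrdvd : (2 : ℤ) ∣ r := by
      rw [hrdef]
      exact dvd_sub hdvd (Dvd.dvd.mul_right (dvd_mul_right 2 a') q2)
    have hrne : r ≠ a' := by intro h; rw [h] at hrdvd; exact ha'odd hrdvd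
    set m : ℤ := if r < a' then -q2 else -(q2 + 1) with hm
    set γ₂ : SL2 := Lmat ^ m * γ₁ with hγ₂
    have hcoe2 : (γ₂ : Matrix (Fin 2) (Fin 2) ℤ)
        = !![1, 0; 2 * m, 1] * (γ₁ : Matrix (Fin 2) (Fin 2) ℤ) := by
      rw [hγ₂, Matrix.SpecialLinearGroup.coe_mul, coe_Lmat_zpow]
    have h210 : (γ₂ : Matrix (Fin 2) (Fin 2) ℤ) 1 0 = 2 * m * a' + c := by
      rw [hcoe2, Matrix.mul_apply, Fin.sum_univ_two, h100, h110]
      simp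
    have hcc : 2 * m * a' + c = if r < a' then r else r - 2 * a' := by
      rw [hm]
      split
      · rw [hrdef]; ring
      · rw [hrdef]; ring
    have habs : ((γ₂ : Matrix (Fin 2) (Fin 2) ℤ) 1 0).natAbs < n := by
      rw [h210, hcc]
      have hca : a' < c.natAbs := by
        rcases abs_cases c with ⟨h1, _⟩ | ⟨h1, _⟩ <;> omega
      rw [← hn]
      split <;> omega
    have h2dvd : (2 : ℤ) ∣ (γ₂ : Matrix (Fin 2) (Fin 2) ℤ) 1 0 := by
      rw [h210]
      exact dvd_add (Dvd.dvd.mul_right (dvd_mul_right 2 m) a') hdvd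
    have hγ₂G : γ₂ ∈ G := ih _ habs γ₂ rfl h2dvd
    have hfinal : γ = Tmat ^ q * (Lmat ^ (-m) * γ₂) := by
      rw [hγ₂, hγ₁]
      group
    rw [hfinal]
    exact G.mul_mem (G.zpow_mem hTG q)
      (G.mul_mem (G.zpow_mem hLG (-m)) hγ₂G)

end Gamma0TwoAux

/-- In `SL(2,ℤ)`, the subgroup `Γ₀(2)` (matrices `[[a,b],[c,d]]` with `c ≡ 0 (mod 2)`)
is generated by `T = [[1,1],[0,1]]` and `S T² S T = [[−1,−1],[2,1]]`. -/
theorem gamma0_two_generated_by_T_and_ST2ST :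
    ∀ γ : Matrix.SpecialLinearGroup (Fin 2) ℤ,
      γ ∈ Subgroup.closure {Tmat, ST2STmat} ↔ (2 : ℤ) ∣ (γ : Matrix (Fin 2) (Fin 2) ℤ) 1 0 := by
  intro γ
  constructor
  · intro h
    have hle : Subgroup.closure {Tmat, ST2STmat} ≤ CongruenceSubgroup.Gamma0 2 := by
      rw [Subgroup.closure_le]
      rintro x hx
      simp only [Set.mem_insert_iff, Set.mem_singleton_iff] at hx
      rcases hx with rfl | rfl <;>
        simp only [SetLike.mem_coe, CongruenceSubgroup.Gamma0_mem] <;> decide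
    have h2 := hle h
    rw [CongruenceSubgroup.Gamma0_mem] at h2
    exact (ZMod.intCast_zmod_eq_zero_iff_dvd _ 2).mp h2
  · intro hdvd
    exact Gamma0TwoAux.mem_closure_of_dvd _ γ rfl hdvd
end

section
/- In SL(2,ℤ), the subgroup Γ⁰(2) is generated by the two matrices S T S = [[−1,0],[1,−1]] and T² S T S = [[1,−2],[1,−1]], where S = [[0,−1],[1,0]] and T = [[1,1],[0,1]]. -/
open Matrix

/-- `S T S = [[−1,0],[1,−1]]` in `SL(2,ℤ)`, where `S = [[0,−1],[1,0]]`, `T = [[1,1],[0,1]]`. -/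
def STSmat : Matrix.SpecialLinearGroup (Fin 2) ℤ :=
  ⟨!![-1, 0; 1, -1], by norm_num [Matrix.det_fin_two_of]⟩

/-- `T² S T S = [[1,−2],[1,−1]]` in `SL(2,ℤ)`. -/
def T2STSmat : Matrix.SpecialLinearGroup (Fin 2) ℤ :=
  ⟨!![1, -2; 1, -1], by norm_num [Matrix.det_fin_two_of]⟩

abbrev SL2Z := Matrix.SpecialLinearGroup (Fin 2) ℤ

noncomputable def Hgen : Subgroup SL2Z := Subgroup.closure {STSmat, T2STSmat}

def Umat : SL2Z := ⟨!![1, 2; 0, 1], by norm_num [Matrix.det_fin_two_of]⟩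
def Lmat : SL2Z := ⟨!![1, 0; 1, 1], by norm_num [Matrix.det_fin_two_of]⟩
def negI : SL2Z := ⟨!![-1, 0; 0, -1], by norm_num [Matrix.det_fin_two_of]⟩

def uPow (k : ℤ) : SL2Z := ⟨!![1, 2*k; 0, 1], by norm_num [Matrix.det_fin_two_of]⟩
def lPow (k : ℤ) : SL2Z := ⟨!![1, 0; k, 1], by norm_num [Matrix.det_fin_two_of]⟩

lemma hU_mem : Umat ∈ Hgen := by
  have h : Umat * STSmat = T2STSmat := by
    ext i j
    fin_cases i <;> fin_cases j <;>
      simp only [Matrix.SpecialLinearGroup.coe_mul] <;> simp [Umat, STSmat, T2STSmat, Matrix.mul_apply, Fin.sum_univ_two]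
  have : Umat = T2STSmat * STSmat⁻¹ := by rw [← h]; group
  rw [this]
  exact mul_mem (Subgroup.subset_closure (by simp)) (inv_mem (Subgroup.subset_closure (by simp)))

lemma hSTS_mem : STSmat ∈ Hgen := Subgroup.subset_closure (by simp)

lemma hNegI_mem : negI ∈ Hgen := by
  have h : STSmat * Umat * STSmat * Umat = negI := by
    ext i j
    fin_cases i <;> fin_cases j <;>
      simp only [Matrix.SpecialLinearGroup.coe_mul] <;> simp [Umat, STSmat, negI, Matrix.mul_apply, Fin.sum_univ_two]
  rw [← h]
  exact mul_mem (mul_mem (mul_mem hSTS_mem hU_mem) hSTS_mem) hU_mem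

lemma hL_mem : Lmat ∈ Hgen := by
  have h : STSmat * Lmat = negI := by
    ext i j
    fin_cases i <;> fin_cases j <;>
      simp only [Matrix.SpecialLinearGroup.coe_mul] <;> simp [Lmat, STSmat, negI, Matrix.mul_apply, Fin.sum_univ_two]
  have : Lmat = STSmat⁻¹ * negI := by rw [← h]; group
  rw [this]
  exact mul_mem (inv_mem hSTS_mem) hNegI_mem

lemma hu_mem (k : ℤ) : uPow k ∈ Hgen := by
  induction k using Int.induction_on with
  | zero =>
      have : uPow 0 = 1 := by
        ext i j; fin_cases i <;> fin_cases j <;> simp [uPow]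
      rw [this]; exact one_mem _
  | succ i ih =>
      have h : uPow (i+1) = uPow i * Umat := by
        ext i' j
        fin_cases i' <;> fin_cases j <;>
          simp only [Matrix.SpecialLinearGroup.coe_mul] <;> simp [uPow, Umat, Matrix.mul_apply, Fin.sum_univ_two] <;> ring
      rw [h]; exact mul_mem ih hU_mem
  | pred i ih =>
      have h : uPow (-i - 1) * Umat = uPow (-i) := by
        ext i' j
        fin_cases i' <;> fin_cases j <;>
          simp only [Matrix.SpecialLinearGroup.coe_mul] <;> simp [uPow, Umat, Matrix.mul_apply, Fin.sum_univ_two] <;> ring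
      have : uPow (-i - 1) = uPow (-i) * Umat⁻¹ := by rw [← h]; group
      rw [this]; exact mul_mem ih (inv_mem hU_mem)

lemma hl_mem (k : ℤ) : lPow k ∈ Hgen := by
  induction k using Int.induction_on with
  | zero =>
      have : lPow 0 = 1 := by
        ext i j; fin_cases i <;> fin_cases j <;> simp [lPow]
      rw [this]; exact one_mem _
  | succ i ih =>
      have h : lPow (i+1) = lPow i * Lmat := by
        ext i' j
        fin_cases i' <;> fin_cases j <;>
          simp only [Matrix.SpecialLinearGroup.coe_mul] <;> simp [lPow, Lmat, Matrix.mul_apply, Fin.sum_univ_two] <;> ring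
      rw [h]; exact mul_mem ih hL_mem
  | pred i ih =>
      have h : lPow (-i - 1) * Lmat = lPow (-i) := by
        ext i' j
        fin_cases i' <;> fin_cases j <;>
          simp only [Matrix.SpecialLinearGroup.coe_mul] <;> simp [lPow, Lmat, Matrix.mul_apply, Fin.sum_univ_two] <;> ring
      have : lPow (-i - 1) = lPow (-i) * Lmat⁻¹ := by rw [← h]; group
      rw [this]; exact mul_mem ih (inv_mem hL_mem)

lemma div_lemma : ∀ (a n : ℤ), n ≠ 0 → ∃ q : ℤ, 2 * (a + q * n).natAbs ≤ n.natAbs := by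
  have key : ∀ (a m : ℤ), 0 < m → ∃ q : ℤ, 2 * (a + q * m).natAbs ≤ m.natAbs := by
    intro a m hm
    have h0 : 0 ≤ a % m := Int.emod_nonneg a (by omega)
    have h1 : a % m < m := Int.emod_lt_of_pos a hm
    have hd : a % m = a - m * (a / m) := Int.emod_def a m
    by_cases hc : 2 * (a % m) ≤ m
    · refine ⟨-(a / m), ?_⟩
      have e1 : a + (-(a / m)) * m = a % m := by rw [hd]; ring
      rw [e1]; omega
    · refine ⟨-(a / m) - 1, ?_⟩
      have e1 : a + (-(a / m) - 1) * m = a % m - m := by rw [hd]; ring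
      rw [e1]; omega
  intro a n hn
  rcases lt_or_gt_of_ne hn with h | h
  · obtain ⟨q, hq⟩ := key a (-n) (by omega)
    refine ⟨-q, ?_⟩
    have e : a + (-q) * n = a + q * (-n) := by ring
    rw [e]; omega
  · exact key a n h

lemma descent : ∀ n : ℕ, ∀ M : SL2Z, ((M : Matrix (Fin 2) (Fin 2) ℤ) 1 0).natAbs ≤ n →
    (2:ℤ) ∣ (M : Matrix (Fin 2) (Fin 2) ℤ) 0 1 → M ∈ Hgen := by
  intro n
  induction n using Nat.strong_induction_on with
  | _ n ih =>
  intro M hcn hb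
  set a := (M : Matrix (Fin 2) (Fin 2) ℤ) 0 0 with ha_def
  set b := (M : Matrix (Fin 2) (Fin 2) ℤ) 0 1 with hb_def
  set c := (M : Matrix (Fin 2) (Fin 2) ℤ) 1 0 with hc_def
  set d := (M : Matrix (Fin 2) (Fin 2) ℤ) 1 1 with hd_def
  obtain ⟨k, hk⟩ := hb
  have hdet : a * d - b * c = 1 := by
    have := M.prop
    rw [Matrix.det_fin_two] at this
    exact this
  by_cases hc0 : c = 0
  · -- c = 0 : M = ± uPow k
    have had : a * d = 1 := by rw [hc0] at hdet; linarith
    rcases Int.mul_eq_one_iff_eq_one_or_neg_one.mp had with ⟨ha1, hd1⟩ | ⟨ha1, hd1⟩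
    · have hMeq : M = uPow k := by
        ext i j
        fin_cases i <;> fin_cases j <;>
          simp only [uPow] <;> simp [← ha_def, ← hb_def, ← hc_def, ← hd_def, ha1, hd1, hk, hc0]
      rw [hMeq]; exact hu_mem k
    · have hMeq : M = negI * uPow (-k) := by
        ext i j
        fin_cases i <;> fin_cases j <;>
          simp only [Matrix.SpecialLinearGroup.coe_mul] <;> simp [negI, uPow, Matrix.mul_apply, Fin.sum_univ_two,
            ← ha_def, ← hb_def, ← hc_def, ← hd_def, ha1, hd1, hk, hc0]
      rw [hMeq]; exact mul_mem hNegI_mem (hu_mem _)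
  · -- c ≠ 0
    have haodd : ¬ (2:ℤ) ∣ a := by
      rintro ⟨t, ht⟩
      have : (1:ℤ) = 2 * (t * d) - 2 * (k * c) := by
        rw [← hdet, ht, hk]; ring
      omega
    obtain ⟨q, hq⟩ := div_lemma a (2*c) (by omega)
    set a₁ := a + q * (2*c) with ha₁_def
    have ha₁ne : a₁ ≠ 0 := by
      intro h0
      exact haodd ⟨-(q*c), by linear_combination h0⟩
    obtain ⟨r, hr⟩ := div_lemma c a₁ ha₁ne
    set M' := lPow r * (uPow q * M) with hM'_def
    have e10 : (M' : Matrix (Fin 2) (Fin 2) ℤ) 1 0 = c + r * a₁ := by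
      simp only [hM'_def, Matrix.SpecialLinearGroup.coe_mul]
      simp [hM'_def, lPow, uPow, Matrix.mul_apply, Matrix.vecMul, dotProduct,
        Fin.sum_univ_two, ← ha_def, ← hc_def, ha₁_def]
      ring
    have e01 : (M' : Matrix (Fin 2) (Fin 2) ℤ) 0 1 = b + q * (2*d) := by
      simp only [hM'_def, Matrix.SpecialLinearGroup.coe_mul]
      simp [hM'_def, lPow, uPow, Matrix.mul_apply, Matrix.vecMul, dotProduct,
        Fin.sum_univ_two, ← hb_def, ← hd_def]
      ring
    have hlt : ((M' : Matrix (Fin 2) (Fin 2) ℤ) 1 0).natAbs < n := by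
      rw [e10]
      omega
    have hM'mem : M' ∈ Hgen := by
      refine ih _ hlt M' le_rfl ?_
      rw [e01, hk]
      exact ⟨k + q*d, by ring⟩
    have hMeq : M = (uPow q)⁻¹ * ((lPow r)⁻¹ * M') := by
      rw [hM'_def]; group
    rw [hMeq]
    exact mul_mem (inv_mem (hu_mem q)) (mul_mem (inv_mem (hl_mem r)) hM'mem)

def Gup0 : Subgroup SL2Z where
  carrier := {γ | (2:ℤ) ∣ (γ : Matrix (Fin 2) (Fin 2) ℤ) 0 1}
  one_mem' := by simp
  mul_mem' := by
    rintro A B ⟨x, hx⟩ ⟨y, hy⟩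
    show (2:ℤ) ∣ ((A * B : SL2Z) : Matrix (Fin 2) (Fin 2) ℤ) 0 1
    rw [Matrix.SpecialLinearGroup.coe_mul, Matrix.mul_apply, Fin.sum_univ_two]
    rw [hx, hy]
    ring_nf
    exact ⟨(A : Matrix (Fin 2) (Fin 2) ℤ) 0 0 * y + x * (B : Matrix (Fin 2) (Fin 2) ℤ) 1 1, by ring⟩
  inv_mem' := by
    rintro A ⟨x, hx⟩
    simp only [Set.mem_setOf_eq] at *
    have : ((A⁻¹ : SL2Z) : Matrix (Fin 2) (Fin 2) ℤ) 0 1 = -((A : Matrix (Fin 2) (Fin 2) ℤ) 0 1) := by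
      rw [Matrix.SpecialLinearGroup.SL2_inv_expl A]
      simp
    rw [this, hx]
    exact ⟨-x, by ring⟩

/-- In `SL(2,ℤ)`, the subgroup `Γ⁰(2)` (matrices `[[a,b],[c,d]]` with `b ≡ 0 (mod 2)`)
is generated by `S T S = [[−1,0],[1,−1]]` and `T² S T S = [[1,−2],[1,−1]]`. -/
theorem gammaUpper0_two_generated_by_STS_and_T2STS :
    ∀ γ : Matrix.SpecialLinearGroup (Fin 2) ℤ,
      γ ∈ Subgroup.closure {STSmat, T2STSmat} ↔ (2 : ℤ) ∣ (γ : Matrix (Fin 2) (Fin 2) ℤ) 0 1 := by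
  intro γ
  constructor
  · intro h
    have hle : Subgroup.closure {STSmat, T2STSmat} ≤ Gup0 := by
      rw [Subgroup.closure_le]
      rintro x (rfl | rfl)
      · exact ⟨0, by simp [STSmat]⟩
      · exact ⟨-1, by simp [T2STSmat]⟩
    exact hle h
  · intro h
    exact descent ((γ : Matrix (Fin 2) (Fin 2) ℤ) 1 0).natAbs γ le_rfl h
end
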